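/- Let G=(V,E) be a finite simple undirected graph and x∈{0,1}^E. Then x is the incidence vector of the edge cut δ(U) for some U⊆V if and only if x satisfies all cycle inequalities, i.e., for every simple cycle C of G and every F⊆C with |F| odd one has Σ_{e∈F} x(e) − Σ_{e∈C∖F} x(e) ≤ |F|−1. Equivalently, x∈{0,1}^E is the incidence vector of a cut if and only if every simple cycle C of G contains an even number of edges e with x(e)=1. -/

import Mathlib

variable {V : Type*}

/-- `e` is an edge of `G` that crosses the cut induced by the vertex set `U`,
i.e. `e ∈ δ(U) := {{u,v} ∈ E : u ∈ U, v ∉ U}`. -/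
def inCutSet (G : SimpleGraph V) (U : Set V) (e : Sym2 V) : Prop :=
  e ∈ G.edgeSet ∧ (∃ u ∈ e, u ∈ U) ∧ ∃ v ∈ e, v ∉ U

/-- `C` is the edge set of a simple cycle of `G`. -/
def IsSimpleCycleEdgeSet [DecidableEq V] (G : SimpleGraph V) (C : Finset (Sym2 V)) : Prop :=
  ∃ (v : V) (p : G.Walk v v), p.IsCycle ∧ C = p.edges.toFinset

namespace CutAux

open SimpleGraph

/-- Weight (mod 2) of a list of edges with respect to `x`. -/
def wtE (x : Sym2 V → ℚ) (l : List (Sym2 V)) : ZMod 2 :=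
  (l.map (fun e => if x e = 1 then (1 : ZMod 2) else 0)).sum

lemma wtE_nil (x : Sym2 V → ℚ) : wtE x [] = 0 := rfl

lemma wtE_cons (x : Sym2 V → ℚ) (e : Sym2 V) (l : List (Sym2 V)) :
    wtE x (e :: l) = (if x e = 1 then (1 : ZMod 2) else 0) + wtE x l := by
  simp [wtE]

lemma wtE_append (x : Sym2 V → ℚ) (l m : List (Sym2 V)) :
    wtE x (l ++ m) = wtE x l + wtE x m := by
  simp [wtE]

lemma wtE_perm (x : Sym2 V → ℚ) {l m : List (Sym2 V)} (h : l.Perm m) :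
    wtE x l = wtE x m :=
  (h.map _).sum_eq

lemma wtE_eq_card [DecidableEq V] (x : Sym2 V → ℚ) {l : List (Sym2 V)} (hl : l.Nodup) :
    wtE x l = ((l.toFinset.filter (fun e => x e = 1)).card : ZMod 2) := by
  induction l with
  | nil => simp [wtE]
  | cons a l ih =>
    rw [List.nodup_cons] at hl
    rw [wtE_cons, ih hl.2, List.toFinset_cons, Finset.filter_insert]
    split
    · rw [Finset.card_insert_of_notMem (by simp [hl.1])]
      push_cast
      ring
    · rw [zero_add]

variable {G : SimpleGraph V}

/-- Weight (mod 2) of a walk. -/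
def wtW (x : Sym2 V → ℚ) {u v : V} (p : G.Walk u v) : ZMod 2 := wtE x p.edges

lemma wtW_cons (x : Sym2 V → ℚ) {u v w : V} (h : G.Adj u v) (p : G.Walk v w) :
    wtW x (SimpleGraph.Walk.cons h p)
      = (if x s(u, v) = 1 then (1 : ZMod 2) else 0) + wtW x p := by
  rw [wtW, SimpleGraph.Walk.edges_cons, wtE_cons]; rfl

lemma wtW_append (x : Sym2 V → ℚ) {u v w : V} (p : G.Walk u v) (q : G.Walk v w) :
    wtW x (p.append q) = wtW x p + wtW x q := by
  rw [wtW, SimpleGraph.Walk.edges_append, wtE_append]; rfl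

lemma wtW_reverse (x : Sym2 V → ℚ) {u v : V} (p : G.Walk u v) :
    wtW x p.reverse = wtW x p := by
  rw [wtW, SimpleGraph.Walk.edges_reverse]
  exact wtE_perm x (List.reverse_perm _)

lemma zmod2_cases (z : ZMod 2) : z = 0 ∨ z = 1 := by revert z; decide

lemma zmod2_add_eq_zero {a b : ZMod 2} (h : a + b = 0) : a = b := by revert a b; decide

/-- Splitting a closed walk whose base point occurs at least twice in the tail
of its support into two strictly shorter closed walks. -/
lemma split_closed [DecidableEq V] (x : Sym2 V → ℚ) {u : V} (d : G.Walk u u) (hnil : ¬ d.Nil)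
    (hd : 2 ≤ d.support.tail.count u) :
    ∃ (d1 d2 : G.Walk u u), wtW x d = wtW x d1 + wtW x d2 ∧
      d1.length < d.length ∧ d2.length < d.length := by
  cases d with
  | nil => simp at hnil
  | @cons _ w _ h p =>
    have hu : u ∈ p.support := by
      have : 0 < p.support.count u := by
        have := hd
        rw [Walk.support_cons, List.tail_cons] at this
        omega
      exact List.count_pos_iff.mp this
    have hspec := p.take_spec hu
    set q := p.takeUntil u hu with hq
    set r := p.dropUntil u hu with hr
    have hcq : q.support.count u = 1 := p.count_support_takeUntil_eq_one hu
    have hrnil : ¬ r.Nil := by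
      intro hN
      have hre : r = Walk.nil := hN.eq_nil
      have : p.support.count u = 1 := by
        rw [← hspec, hre, Walk.append_nil]
        exact hcq
      rw [Walk.support_cons, List.tail_cons] at hd
      omega
    have hrlen : 1 ≤ r.length := by
      have := Walk.not_nil_iff_lt_length.mp hrnil
      omega
    have hlen : q.length + r.length = p.length := by
      rw [← hspec, Walk.length_append]
    refine ⟨Walk.cons h q, r, ?_, ?_, ?_⟩
    · rw [wtW_cons, wtW_cons, ← hspec, wtW_append, add_assoc]
    · simp only [Walk.length_cons]
      omega
    · simp only [Walk.length_cons]
      omega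

/-- If every cycle has weight `0`, then every closed walk has weight `0`. -/
lemma closed_wt [DecidableEq V] (x : Sym2 V → ℚ)
    (hyp : ∀ (v : V) (c : G.Walk v v), c.IsCycle → wtW x c = 0) :
    ∀ (v : V) (c : G.Walk v v), wtW x c = 0 := by
  intro v c
  generalize hn : c.length = n
  induction n using Nat.strong_induction_on generalizing v c with
  | _ n IH =>
  subst hn
  by_cases hnil : c.Nil
  · rw [hnil.eq_nil]
    simp [wtW, wtE]
  by_cases hsplit : 2 ≤ c.support.tail.count v
  · obtain ⟨d1, d2, hw, h1, h2⟩ := split_closed x c hnil hsplit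
    rw [hw, IH _ h1 _ d1 rfl, IH _ h2 _ d2 rfl, add_zero]
  by_cases hnd : c.support.tail.Nodup
  · cases c with
    | nil => simp [wtW, wtE]
    | @cons _ w _ h p =>
      rw [Walk.support_cons, List.tail_cons] at hnd
      by_cases he : s(v, w) ∈ p.edges
      · cases p with
        | nil => exact absurd rfl h.ne
        | @cons _ u _ h2 p2 =>
          rw [Walk.edges_cons, List.mem_cons] at he
          rcases he with he | he
          · have hu : u = v := by
              rcases Sym2.eq_iff.mp he with ⟨h1, -⟩ | ⟨h1, -⟩
              · exact absurd h1 h.ne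
              · exact h1.symm
            subst hu
            cases p2 with
            | nil =>
              show wtE x _ = 0
              rw [Walk.edges_cons, Walk.edges_cons, Walk.edges_nil, wtE_cons, wtE_cons,
                wtE_nil, add_zero, Sym2.eq_swap (a := w) (b := u)]
              rcases zmod2_cases (if x s(u, w) = 1 then (1 : ZMod 2) else 0) with h0 | h0 <;>
                rw [h0] <;> decide
            | @cons _ t _ h3 p3 =>
              exfalso
              rw [Walk.support_cons, Walk.support_cons, List.nodup_cons,
                List.nodup_cons] at hnd
              exact hnd.2.1 (Walk.end_mem_support p3)
          · exfalso
            have hw : w ∈ p2.support := p2.snd_mem_support_of_mem_edges he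
            rw [Walk.support_cons, List.nodup_cons] at hnd
            exact hnd.1 hw
      · have hcyc : (Walk.cons h p).IsCycle :=
          (Walk.cons_isCycle_iff p h).mpr ⟨Walk.IsPath.mk' hnd, he⟩
        exact hyp v _ hcyc
  · obtain ⟨u, hu⟩ := List.exists_duplicate_iff_not_nodup.mpr hnd
    have hu2 : 2 ≤ c.support.tail.count u := List.duplicate_iff_two_le_count.mp hu
    have humem : u ∈ c.support := List.mem_of_mem_tail hu.mem
    have hwt' : wtW x (c.rotate u humem) = wtW x c :=
      wtE_perm x (c.rotate_edges u humem).perm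
    have hlen' : (c.rotate u humem).length = c.length := by
      rw [← Walk.length_edges, ← Walk.length_edges]
      exact (c.rotate_edges u humem).perm.length_eq
    have hnil' : ¬ (c.rotate u humem).Nil := by
      rw [Walk.not_nil_iff_lt_length] at hnil ⊢
      omega
    have hcnt' : 2 ≤ (c.rotate u humem).support.tail.count u := by
      rw [(c.support_rotate u humem).perm.count_eq]
      exact hu2
    obtain ⟨d1, d2, hw, h1, h2⟩ := split_closed x (c.rotate u humem) hnil' hcnt'
    rw [← hwt', hw, IH _ (by omega) _ d1 rfl, IH _ (by omega) _ d2 rfl, add_zero]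


lemma zmod2_add_self (z : ZMod 2) : z + z = 0 := by revert z; decide

lemma zmod2_assoc (a m b : ZMod 2) : a + m + (m + b) = a + b := by revert a m b; decide

open Classical in
noncomputable def chiU (U : Set V) (v : V) : ZMod 2 := if v ∈ U then 1 else 0

lemma cut_edge (x : Sym2 V → ℚ) {U : Set V}
    (hU : ∀ e ∈ G.edgeSet, (x e = 1 ↔ inCutSet G U e))
    {a b : V} (h : G.Adj a b) :
    (if x s(a, b) = 1 then (1 : ZMod 2) else 0) = chiU U a + chiU U b := by
  classical
  have hmem : s(a, b) ∈ G.edgeSet := h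
  have hcut : inCutSet G U s(a, b) ↔ ((a ∈ U ∧ b ∉ U) ∨ (b ∈ U ∧ a ∉ U)) := by
    constructor
    · rintro ⟨-, ⟨u, hu, huU⟩, ⟨w, hw, hwU⟩⟩
      rw [Sym2.mem_iff] at hu hw
      rcases hu with rfl | rfl <;> rcases hw with rfl | rfl <;> tauto
    · rintro (⟨h1, h2⟩ | ⟨h1, h2⟩)
      · exact ⟨hmem, ⟨a, by simp, h1⟩, ⟨b, by simp, h2⟩⟩
      · exact ⟨hmem, ⟨b, by simp, h1⟩, ⟨a, by simp, h2⟩⟩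
  simp only [hU _ hmem, hcut]
  by_cases ha : a ∈ U <;> by_cases hb : b ∈ U <;>
    simp [chiU, ha, hb] <;> decide

lemma cut_walk (x : Sym2 V → ℚ) {U : Set V}
    (hU : ∀ e ∈ G.edgeSet, (x e = 1 ↔ inCutSet G U e))
    {a b : V} (p : G.Walk a b) : wtW x p = chiU U a + chiU U b := by
  induction p with
  | nil => exact (zmod2_add_self _).symm
  | @cons a m b h p ih =>
    rw [wtW_cons, ih, cut_edge x hU h, zmod2_assoc]

lemma even_iff (n : ℕ) : (n : ZMod 2) = 0 ↔ Even n := by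
  rw [ZMod.natCast_eq_zero_iff, ← even_iff_two_dvd]

lemma cut_to_even [DecidableEq V] (x : Sym2 V → ℚ)
    (hcut : ∃ U : Set V, ∀ e ∈ G.edgeSet, (x e = 1 ↔ inCutSet G U e)) :
    ∀ C : Finset (Sym2 V), IsSimpleCycleEdgeSet G C →
      Even ((C.filter (fun e => x e = 1)).card) := by
  obtain ⟨U, hU⟩ := hcut
  rintro C ⟨v, c, hc, rfl⟩
  rw [← even_iff, ← wtE_eq_card x hc.edges_nodup]
  have h2 : wtW x c = 0 := by rw [cut_walk x hU c]; exact zmod2_add_self _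
  exact h2

lemma even_to_cut [DecidableEq V] (x : Sym2 V → ℚ) (hx01 : ∀ e ∈ G.edgeSet, x e = 0 ∨ x e = 1)
    (heven : ∀ C : Finset (Sym2 V), IsSimpleCycleEdgeSet G C →
      Even ((C.filter (fun e => x e = 1)).card)) :
    ∃ U : Set V, ∀ e ∈ G.edgeSet, (x e = 1 ↔ inCutSet G U e) := by
  have hcyc : ∀ (v : V) (c : G.Walk v v), c.IsCycle → wtW x c = 0 := by
    intro v c hc
    have hcard : wtW x c
        = ((c.edges.toFinset.filter (fun e => x e = 1)).card : ZMod 2) :=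
      wtE_eq_card x hc.edges_nodup
    rw [hcard, even_iff]
    exact heven _ ⟨v, c, hc, rfl⟩
  have hclosed := closed_wt x hcyc
  have hwd : ∀ {a b : V} (p q : G.Walk a b), wtW x p = wtW x q := by
    intro a b p q
    have h0 := hclosed a (p.append q.reverse)
    rw [wtW_append, wtW_reverse] at h0
    exact zmod2_add_eq_zero h0
  set rep : V → V := fun v => (G.connectedComponentMk v).out with hrep
  have hreach : ∀ v, G.Reachable (rep v) v := by
    intro v
    exact SimpleGraph.ConnectedComponent.exact ((G.connectedComponentMk v).out_eq)
  set U : Set V := {v | ∃ p : G.Walk (rep v) v, wtW x p = 1} with hUdef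
  have hUchar : ∀ (u v : V) (p : G.Walk u v), rep v = u → (v ∈ U ↔ wtW x p = 1) := by
    intro u v p hr
    subst hr
    constructor
    · rintro ⟨q, hq⟩; rw [← hwd q p]; exact hq
    · intro h; exact ⟨p, h⟩
  refine ⟨U, ?_⟩
  intro e
  induction e using Sym2.ind with
  | _ a b =>
  intro he
  have hab : G.Adj a b := he
  have hrepeq : rep b = rep a := by
    rw [hrep]
    show (G.connectedComponentMk b).out = (G.connectedComponentMk a).out
    rw [SimpleGraph.ConnectedComponent.connectedComponentMk_eq_of_adj hab.symm]
  obtain ⟨p⟩ := hreach a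
  have hpa := hUchar (rep a) a p rfl
  have hpb := hUchar (rep a) b (p.concat hab) hrepeq
  have hcat : wtW x (p.concat hab)
      = wtW x p + (if x s(a, b) = 1 then (1 : ZMod 2) else 0) := by
    show wtE x (p.concat hab).edges = wtE x p.edges + _
    rw [SimpleGraph.Walk.edges_concat, List.concat_eq_append, wtE_append, wtE_cons, wtE_nil, add_zero]
  rcases hx01 _ he with hx | hx
  · have hne : ¬ x s(a, b) = 1 := by rw [hx]; norm_num
    have hiff : a ∈ U ↔ b ∈ U := by
      rw [hpa, hpb, hcat, if_neg hne, add_zero]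
    constructor
    · intro h1; exact absurd h1 hne
    · rintro ⟨-, ⟨u, hu, huU⟩, ⟨w, hw, hwU⟩⟩
      rw [Sym2.mem_iff] at hu hw
      rcases hu with rfl | rfl <;> rcases hw with rfl | rfl <;> tauto
  · have hch : (if x s(a, b) = 1 then (1 : ZMod 2) else 0) = 1 := if_pos hx
    constructor
    · intro _
      refine ⟨he, ?_⟩
      rcases zmod2_cases (wtW x p) with h0 | h0
      · have haU : a ∉ U := by rw [hpa, h0]; decide
        have hbU : b ∈ U := by rw [hpb, hcat, hch, h0]; decide
        exact ⟨⟨b, by simp, hbU⟩, ⟨a, by simp, haU⟩⟩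
      · have haU : a ∈ U := by rw [hpa, h0]
        have hbU : b ∉ U := by rw [hpb, hcat, hch, h0]; decide
        exact ⟨⟨a, by simp, haU⟩, ⟨b, by simp, hbU⟩⟩
    · intro _; exact hx

lemma edges_mem [DecidableEq V] {C : Finset (Sym2 V)} (hC : IsSimpleCycleEdgeSet G C) :
    ∀ e ∈ C, e ∈ G.edgeSet := by
  obtain ⟨v, c, hc, rfl⟩ := hC
  intro e he
  rw [List.mem_toFinset] at he
  exact c.edges_subset_edgeSet he

lemma sum_eq_card [DecidableEq V] (x : Sym2 V → ℚ)
    (hx01 : ∀ e ∈ G.edgeSet, x e = 0 ∨ x e = 1) {F : Finset (Sym2 V)}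
    (hE : ∀ e ∈ F, e ∈ G.edgeSet) :
    ∑ e ∈ F, x e = ((F.filter (fun e => x e = 1)).card : ℚ) := by
  rw [← Finset.sum_filter_add_sum_filter_not F (fun e => x e = 1)]
  have h1 : ∑ e ∈ F.filter (fun e => x e = 1), x e
      = ((F.filter (fun e => x e = 1)).card : ℚ) := by
    rw [Finset.sum_congr rfl (fun e heF => (Finset.mem_filter.mp heF).2)]
    simp
  have h2 : ∑ e ∈ F.filter (fun e => ¬ x e = 1), x e = 0 := by
    refine Finset.sum_eq_zero (fun e heF => ?_)
    obtain ⟨heF, hne⟩ := Finset.mem_filter.mp heF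
    rcases hx01 e (hE e heF) with h | h
    · exact h
    · exact absurd h hne
  rw [h1, h2, add_zero]

lemma even_to_ineq [DecidableEq V] (x : Sym2 V → ℚ)
    (hx01 : ∀ e ∈ G.edgeSet, x e = 0 ∨ x e = 1)
    (heven : ∀ C : Finset (Sym2 V), IsSimpleCycleEdgeSet G C →
      Even ((C.filter (fun e => x e = 1)).card)) :
    ∀ (C F : Finset (Sym2 V)), IsSimpleCycleEdgeSet G C → F ⊆ C → Odd F.card →
      (∑ e ∈ F, x e) - (∑ e ∈ C \ F, x e) ≤ (F.card : ℚ) - 1 := by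
  intro C F hC hFC hodd
  have hE := edges_mem hC
  have hS : Even ((C.filter (fun e => x e = 1)).card) := heven C hC
  rw [sum_eq_card x hx01 (fun e he => hE e (hFC he)),
    sum_eq_card x hx01 (fun e he => hE e (Finset.mem_sdiff.mp he).1)]
  set a := (F.filter (fun e => x e = 1)).card with hadef
  set b := ((C \ F).filter (fun e => x e = 1)).card with hbdef
  have hab : a + b = (C.filter (fun e => x e = 1)).card := by
    rw [hadef, hbdef, ← Finset.card_union_of_disjoint
      (Finset.disjoint_filter_filter Finset.disjoint_sdiff),
      ← Finset.filter_union, Finset.union_sdiff_of_subset hFC]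
  have haF : a ≤ F.card := Finset.card_filter_le _ _
  have key : a + 1 ≤ F.card + b := by
    obtain ⟨k, hk⟩ := hS
    obtain ⟨m, hm⟩ := hodd
    rw [← hab] at hk
    omega
  have key' : (a : ℚ) + 1 ≤ (F.card : ℚ) + b := by exact_mod_cast key
  linarith

lemma ineq_to_even [DecidableEq V] (x : Sym2 V → ℚ)
    (hx01 : ∀ e ∈ G.edgeSet, x e = 0 ∨ x e = 1)
    (hineq : ∀ (C F : Finset (Sym2 V)), IsSimpleCycleEdgeSet G C → F ⊆ C → Odd F.card →
      (∑ e ∈ F, x e) - (∑ e ∈ C \ F, x e) ≤ (F.card : ℚ) - 1) :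
    ∀ C : Finset (Sym2 V), IsSimpleCycleEdgeSet G C →
      Even ((C.filter (fun e => x e = 1)).card) := by
  intro C hC
  by_contra hodd
  rw [Nat.not_even_iff_odd] at hodd
  have hE := edges_mem hC
  set F := C.filter (fun e => x e = 1) with hF
  have h := hineq C F hC (Finset.filter_subset _ _) hodd
  have h1 : F.filter (fun e => x e = 1) = F := by
    rw [hF, Finset.filter_filter]
    simp
  have h2 : (C \ F).filter (fun e => x e = 1) = ∅ := by
    refine Finset.filter_eq_empty_iff.mpr (fun {e} he hp => ?_)
    rw [Finset.mem_sdiff] at he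
    exact he.2 (Finset.mem_filter.mpr ⟨he.1, hp⟩)
  rw [sum_eq_card x hx01 (fun e he => hE e (Finset.filter_subset _ _ he)),
    sum_eq_card x hx01 (fun e he => hE e (Finset.mem_sdiff.mp he).1),
    h1, h2] at h
  simp at h
  have : (1 : ℚ) ≤ 0 := by linarith
  norm_num at this

end CutAux

/-- A `{0,1}`-valued vector `x` on the edges of `G` is the incidence vector of an edge cut
`δ(U)` if and only if it satisfies all cycle inequalities on simple cycles; equivalently,
if and only if every simple cycle contains an even number of edges `e` with `x(e) = 1`. -/
theorem stmt2 [Fintype V] [DecidableEq V] (G : SimpleGraph V)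
    (x : Sym2 V → ℚ) (hx01 : ∀ e ∈ G.edgeSet, x e = 0 ∨ x e = 1) :
    ((∃ U : Set V, ∀ e ∈ G.edgeSet, (x e = 1 ↔ inCutSet G U e)) ↔
      (∀ (C F : Finset (Sym2 V)), IsSimpleCycleEdgeSet G C → F ⊆ C → Odd F.card →
        (∑ e ∈ F, x e) - (∑ e ∈ C \ F, x e) ≤ (F.card : ℚ) - 1)) ∧
    ((∃ U : Set V, ∀ e ∈ G.edgeSet, (x e = 1 ↔ inCutSet G U e)) ↔
      (∀ C : Finset (Sym2 V), IsSimpleCycleEdgeSet G C →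
        Even (C.filter (fun e => x e = 1)).card)) := by
  refine ⟨⟨fun h => CutAux.even_to_ineq x hx01 (CutAux.cut_to_even x h),
    fun h => CutAux.even_to_cut x hx01 (CutAux.ineq_to_even x hx01 h)⟩,
    ⟨fun h => CutAux.cut_to_even x h, fun h => CutAux.even_to_cut x hx01 h⟩⟩
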